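/- Let $a_1>a_2$, $b_1>b_2$ be real numbers, $T>0$, and $p_1,p_2\in(0,1)$. For $j=1,2$ and $t\in(0,1)$ define $\alpha_j(t)=(1-t)a_j+tb_j-\sqrt{4p_jTt(1-t)}$ and $\beta_j(t)=(1-t)a_j+tb_j+\sqrt{4p_jTt(1-t)}$. Then $\alpha_1(t)>\beta_2(t)$ holds for all $t\in(0,1)$ if and only if $(a_1-a_2)(b_1-b_2) > T(\sqrt{p_1}+\sqrt{p_2})^2$. -/

import Mathlib

lemma sqrt_split (p T t : ℝ) (hp : 0 ≤ p) (hT : 0 ≤ T) (ht : 0 ≤ t) (ht1 : t ≤ 1) :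
    Real.sqrt (4 * p * T * t * (1 - t)) =
      2 * Real.sqrt p * Real.sqrt T * Real.sqrt (t * (1 - t)) := by
  have h1 : Real.sqrt p ^ 2 = p := Real.sq_sqrt hp
  have h2 : Real.sqrt T ^ 2 = T := Real.sq_sqrt hT
  have h3 : Real.sqrt (t * (1 - t)) ^ 2 = t * (1 - t) :=
    Real.sq_sqrt (mul_nonneg ht (by linarith))
  have key : 4 * p * T * t * (1 - t) =
      (2 * Real.sqrt p * Real.sqrt T * Real.sqrt (t * (1 - t))) ^ 2 := by
    have : (2 * Real.sqrt p * Real.sqrt T * Real.sqrt (t * (1 - t))) ^ 2 =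
        4 * (Real.sqrt p ^ 2) * (Real.sqrt T ^ 2) * (Real.sqrt (t * (1 - t)) ^ 2) := by ring
    rw [this, h1, h2, h3]; ring
  rw [key, Real.sqrt_sq (by positivity)]

set_option maxHeartbeats 1000000 in
theorem stmt_0 (a₁ a₂ b₁ b₂ T p₁ p₂ : ℝ)
    (ha : a₁ > a₂) (hb : b₁ > b₂) (hT : 0 < T)
    (hp₁ : p₁ ∈ Set.Ioo (0:ℝ) 1) (hp₂ : p₂ ∈ Set.Ioo (0:ℝ) 1) :
    (∀ t ∈ Set.Ioo (0:ℝ) 1,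
      (1 - t) * a₁ + t * b₁ - Real.sqrt (4 * p₁ * T * t * (1 - t)) >
      (1 - t) * a₂ + t * b₂ + Real.sqrt (4 * p₂ * T * t * (1 - t))) ↔
    (a₁ - a₂) * (b₁ - b₂) > T * (Real.sqrt p₁ + Real.sqrt p₂) ^ 2 := by
  obtain ⟨hp₁0, hp₁1⟩ := hp₁
  obtain ⟨hp₂0, hp₂1⟩ := hp₂
  set A := a₁ - a₂ with hA
  set B := b₁ - b₂ with hB
  have hA0 : 0 < A := by simp [hA]; linarith
  have hB0 : 0 < B := by simp [hB]; linarith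
  set s := Real.sqrt p₁ + Real.sqrt p₂ with hs
  have hs0 : 0 < s := by positivity
  have hsT : Real.sqrt T ^ 2 = T := Real.sq_sqrt hT.le
  constructor
  · intro h
    set t := A / (A + B) with ht
    have hABpos : 0 < A + B := by linarith
    have ht0 : 0 < t := div_pos hA0 hABpos
    have ht1 : t < 1 := by
      rw [ht, div_lt_one hABpos]; linarith
    have h1t : 1 - t = B / (A + B) := by
      field_simp [ht]
      rw [ht, sub_mul, div_mul_cancel₀ _ hABpos.ne']; ring
    have hmain := h t ⟨ht0, ht1⟩
    rw [sqrt_split p₁ T t hp₁0.le hT.le ht0.le ht1.le,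
        sqrt_split p₂ T t hp₂0.le hT.le ht0.le ht1.le] at hmain
    have hprod : t * (1 - t) = A * B / (A + B) ^ 2 := by
      rw [h1t, ht]; field_simp
    have hsq : Real.sqrt (t * (1 - t)) = Real.sqrt (A * B) / (A + B) := by
      rw [hprod]
      rw [show A * B / (A + B) ^ 2 = (Real.sqrt (A * B) / (A + B)) ^ 2 by
        rw [div_pow, Real.sq_sqrt (by positivity)]]
      exact Real.sqrt_sq (by positivity)
    -- hmain gives (1-t)A + tB > 2 s √T √(t(1-t))
    have hkey : 2 * A * B / (A + B) > 2 * s * Real.sqrt T * (Real.sqrt (A * B) / (A + B)) := by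
      have hlhs : (1 - t) * a₁ + t * b₁ - ((1 - t) * a₂ + t * b₂) = 2 * A * B / (A + B) := by
        rw [h1t, ht, hA, hB]; field_simp; ring
      rw [hsq] at hmain
      calc 2 * A * B / (A + B) = (1 - t) * a₁ + t * b₁ - ((1 - t) * a₂ + t * b₂) := hlhs.symm
        _ > 2 * Real.sqrt p₁ * Real.sqrt T * (Real.sqrt (A * B) / (A + B)) +
            2 * Real.sqrt p₂ * Real.sqrt T * (Real.sqrt (A * B) / (A + B)) := by linarith
        _ = 2 * s * Real.sqrt T * (Real.sqrt (A * B) / (A + B)) := by rw [hs]; ring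
    have hAB : A * B > s * Real.sqrt T * Real.sqrt (A * B) := by
      have hne : (A + B) ≠ 0 := hABpos.ne'
      have h' : 2 * (s * Real.sqrt T * Real.sqrt (A * B)) < 2 * (A * B) := by
        calc 2 * (s * Real.sqrt T * Real.sqrt (A * B))
            = 2 * s * Real.sqrt T * (Real.sqrt (A * B) / (A + B)) * (A + B) := by
              field_simp
          _ < 2 * A * B / (A + B) * (A + B) := mul_lt_mul_of_pos_right hkey hABpos
          _ = 2 * (A * B) := by field_simp
      linarith
    have hsqAB : Real.sqrt (A * B) ^ 2 = A * B := Real.sq_sqrt (by positivity)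
    have hsqABpos : 0 < Real.sqrt (A * B) := Real.sqrt_pos.mpr (by positivity)
    have h2 : s * Real.sqrt T < Real.sqrt (A * B) := by
      have hmul : s * Real.sqrt T * Real.sqrt (A * B) <
          Real.sqrt (A * B) * Real.sqrt (A * B) := by nlinarith [hAB, hsqAB]
      exact lt_of_mul_lt_mul_right hmul hsqABpos.le
    have h3 : (s * Real.sqrt T) ^ 2 < Real.sqrt (A * B) ^ 2 :=
      pow_lt_pow_left₀ h2 (by positivity) (by norm_num)
    rw [hsqAB, mul_pow, hsT] at h3
    linarith [h3]
  · intro h t ⟨ht0, ht1⟩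
    rw [sqrt_split p₁ T t hp₁0.le hT.le ht0.le ht1.le,
        sqrt_split p₂ T t hp₂0.le hT.le ht0.le ht1.le]
    have hsqAB : Real.sqrt (A * B) ^ 2 = A * B := Real.sq_sqrt (by positivity)
    have h2 : s * Real.sqrt T < Real.sqrt (A * B) := by
      have hsq2 : (s * Real.sqrt T) ^ 2 < Real.sqrt (A * B) ^ 2 := by
        rw [hsqAB, mul_pow, hsT]
        linarith [h]
      exact lt_of_pow_lt_pow_left₀ 2 (Real.sqrt_nonneg _) hsq2
    have hu : Real.sqrt (t * (1 - t)) > 0 := Real.sqrt_pos.mpr (by nlinarith)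
    -- AM-GM: (1-t)*A + t*B ≥ 2 √(AB) √(t(1-t))
    have hamgm : (1 - t) * A + t * B ≥ 2 * Real.sqrt (A * B) * Real.sqrt (t * (1 - t)) := by
      have hx : Real.sqrt ((1 - t) * A) ^ 2 = (1 - t) * A :=
        Real.sq_sqrt (by nlinarith)
      have hy : Real.sqrt (t * B) ^ 2 = t * B := Real.sq_sqrt (by nlinarith)
      have hxy : Real.sqrt ((1 - t) * A) * Real.sqrt (t * B) =
          Real.sqrt (A * B) * Real.sqrt (t * (1 - t)) := by
        rw [← Real.sqrt_mul (by nlinarith), ← Real.sqrt_mul (by positivity)]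
        ring_nf
      nlinarith [sq_nonneg (Real.sqrt ((1 - t) * A) - Real.sqrt (t * B)), hx, hy, hxy]
    have hstep : 2 * Real.sqrt (A * B) * Real.sqrt (t * (1 - t)) >
        2 * s * Real.sqrt T * Real.sqrt (t * (1 - t)) := by
      nlinarith [h2, hu]
    have : (1 - t) * A + t * B > 2 * s * Real.sqrt T * Real.sqrt (t * (1 - t)) := by linarith
    rw [hs] at this
    simp only [hA, hB] at this
    nlinarith [this]
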